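/- arXiv:1908.02250 — 2 statements merged into one kernel-verified Lean document; each statement's English description precedes it below -/
import Mathlib

section
/- For all nonnegative integers n, k with n ≤ 2^k, τ(n/2^k) = 1 + n/2^k − (1 + D(n + 2^k − 1))/2^k. -/
/-- f m = (#1 digits) - (#0 digits) in the binary expansion of m. -/
def f (m : ℕ) : ℤ :=
  2 * ((Nat.digits 2 m).count 1 : ℤ) - ((Nat.digits 2 m).length : ℤ)

/-- Cumulated deficient binary digit sum (OEIS A268289), D 0 = 0. -/
def D (n : ℕ) : ℤ := ∑ m ∈ Finset.Icc 1 n, f m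

/-- Distance from y to the nearest integer. -/
noncomputable def s (y : ℝ) : ℝ := |y - round y|

/-- The Takagi function. -/
noncomputable def τ (x : ℝ) : ℝ := ∑' n : ℕ, s (2 ^ n * x) / 2 ^ n

/-! ### Auxiliary combinatorial lemmas -/

/-- count of 1 digits -/
def c (n : ℕ) : ℕ := (Nat.digits 2 n).count 1

lemma count_add_pow : ∀ k n, n < 2 ^ k → c (n + 2 ^ k) = c n + 1 := by
  intro k
  induction k with
  | zero =>
    intro n hn
    interval_cases n
    simp [c]
  | succ k ih =>
    intro n hn
    have h1 : 0 < n + 2 ^ (k+1) := by positivity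
    have hd : Nat.digits 2 (n + 2 ^ (k+1)) = (n % 2) :: Nat.digits 2 (n / 2 + 2 ^ k) := by
      rw [Nat.digits_def' (by norm_num) h1]
      congr 1
      · omega
      · congr 1
        omega
    have hh : n / 2 < 2 ^ k := by omega
    rcases Nat.eq_zero_or_pos n with h0 | h0
    · subst h0
      simp only [c, hd] at *
      simp only [Nat.zero_div, Nat.zero_add, Nat.zero_mod] at *
      rw [List.count_cons]
      have := ih 0 (by positivity)
      simp [c] at this
      simp [this]
    · have hdn : Nat.digits 2 n = (n % 2) :: Nat.digits 2 (n / 2) := Nat.digits_def' (by norm_num) h0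
      simp only [c, hd, hdn, List.count_cons]
      have := ih (n / 2) hh
      simp only [c] at this
      omega

lemma len_add_pow (k n : ℕ) (hn : n < 2 ^ k) :
    (Nat.digits 2 (n + 2 ^ k)).length = k + 1 := by
  rw [Nat.digits_len 2 _ (by norm_num) (by positivity)]
  have h2 : (2:ℕ) ^ (k+1) = 2 ^ k + 2 ^ k := by ring
  rw [Nat.log_eq_of_pow_le_of_lt_pow (b := 2) (m := k) (by omega) (by omega)]

lemma f_add_pow (k n : ℕ) (hn : n < 2 ^ k) :
    f (n + 2 ^ k) = 2 * (c n : ℤ) + 1 - k := by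
  unfold f
  rw [len_add_pow k n hn]
  have := count_add_pow k n hn
  unfold c at this
  rw [this]
  unfold c
  push_cast
  ring

lemma sum_c (k : ℕ) : ∑ n ∈ Finset.range (2 ^ k), (2 * (c n : ℤ)) = k * 2 ^ k := by
  induction k with
  | zero => simp [c]
  | succ k ih =>
    have : (2:ℕ) ^ (k+1) = 2 ^ k + 2 ^ k := by ring
    rw [this, Finset.sum_range_add]
    have : ∀ x ∈ Finset.range (2 ^ k), (2 * (c (2 ^ k + x) : ℤ)) = 2 * (c x : ℤ) + 2 := by
      intro x hx
      rw [Finset.mem_range] at hx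
      rw [Nat.add_comm, count_add_pow k x hx]
      push_cast; ring
    rw [Finset.sum_congr rfl this, Finset.sum_add_distrib, ih]
    simp
    ring

lemma D_succ (n : ℕ) : D (n + 1) = D n + f (n + 1) := by
  unfold D
  rw [Finset.sum_Icc_succ_top (by omega)]

lemma D_range (n : ℕ) : D n = ∑ m ∈ Finset.range (n + 1), f m := by
  induction n with
  | zero => simp [D, f]
  | succ n ih => rw [D_succ, ih, ← Finset.sum_range_succ]

lemma D_pow (k : ℕ) : D (2 ^ k - 1) = 2 ^ k - 1 := by
  induction k with
  | zero => simp [D]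
  | succ k ih =>
    have h1 : (2:ℕ) ^ (k+1) - 1 + 1 = 2 ^ k + 2 ^ k := by
      have h2 : (2:ℕ) ^ (k+1) = 2 ^ k + 2 ^ k := by ring
      have : (0:ℕ) < 2 ^ k := by positivity
      omega
    rw [D_range, h1, Finset.sum_range_add]
    have h2 : ∑ m ∈ Finset.range (2 ^ k), f m = D (2 ^ k - 1) := by
      have h4 : (2:ℕ) ^ k - 1 + 1 = 2 ^ k := by
        have : (0:ℕ) < 2 ^ k := by positivity
        omega
      rw [D_range, h4]
    rw [h2, ih]
    have h3 : ∀ x ∈ Finset.range (2 ^ k), f (2 ^ k + x) = 2 * (c x : ℤ) + 1 - k := by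
      intro x hx
      rw [Finset.mem_range] at hx
      rw [Nat.add_comm, f_add_pow k x hx]
    rw [Finset.sum_congr rfl h3]
    simp only [Finset.sum_sub_distrib, Finset.sum_add_distrib, sum_c]
    simp
    push_cast
    ring

/-! ### Auxiliary analytic lemmas -/

lemma s_nonneg (y : ℝ) : 0 ≤ s y := abs_nonneg _

lemma s_le_half (y : ℝ) : s y ≤ 1 / 2 := abs_sub_round y

lemma s_add_int (y : ℝ) (m : ℤ) : s (y + m) = s y := by
  unfold s
  rw [round_add_intCast]
  push_cast
  congr 1
  ring

lemma summable_tau (x : ℝ) : Summable (fun n : ℕ => s (2 ^ n * x) / 2 ^ n) := by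
  refine Summable.of_nonneg_of_le ?_ ?_ summable_geometric_two
  · intro n
    have h1 : (0:ℝ) < 2 ^ n := by positivity
    exact div_nonneg (s_nonneg _) h1.le
  · intro n
    have h1 : (0:ℝ) < 2 ^ n := by positivity
    rw [one_div, inv_pow, ← one_div]
    rw [div_le_div_iff₀ h1 h1]
    have := s_le_half (2 ^ n * x)
    nlinarith

lemma tau_eq (x : ℝ) : τ x = s x + τ (2 * x) / 2 := by
  unfold τ
  rw [Summable.tsum_eq_zero_add (summable_tau x)]
  simp only [pow_zero, one_mul, div_one, pow_succ]
  congr 1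
  have h1 : ∀ n : ℕ, s (2 ^ n * 2 * x) / (2 ^ n * 2) = s (2 ^ n * (2 * x)) / 2 ^ n / 2 := by
    intro n
    rw [mul_assoc]
    ring
  rw [tsum_congr h1, tsum_div_const]

lemma tau_add_one (x : ℝ) : τ (x + 1) = τ x := by
  unfold τ
  apply tsum_congr
  intro n
  congr 1
  have : (2:ℝ) ^ n * (x + 1) = 2 ^ n * x + ((2 ^ n : ℤ) : ℝ) := by push_cast; ring
  rw [this, s_add_int]

lemma tau_zero : τ 0 = 0 := by
  unfold τ
  have : ∀ n : ℕ, s (2 ^ n * (0:ℝ)) / 2 ^ n = 0 := by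
    intro n
    simp [s]
  rw [tsum_congr this, tsum_zero]

lemma tau_one : τ 1 = 0 := by
  have := tau_add_one 0
  rw [tau_zero] at this
  simpa using this

lemma s_lower (y : ℝ) (h0 : 0 ≤ y) (h1 : y ≤ 1/2) : s y = y := by
  unfold s
  rw [round_eq]
  rcases lt_or_eq_of_le h1 with h | h
  · have : ⌊y + 1/2⌋ = 0 := by
      rw [Int.floor_eq_iff]
      constructor <;> [push_cast; push_cast] <;> linarith
    rw [this]
    simp [abs_of_nonneg h0]
  · have : ⌊y + 1/2⌋ = 1 := by
      rw [Int.floor_eq_iff]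
      constructor <;> [push_cast; push_cast] <;> linarith
    rw [this, h]
    norm_num

lemma s_upper (y : ℝ) (h0 : 1/2 ≤ y) (h1 : y ≤ 1) : s y = 1 - y := by
  unfold s
  rw [round_eq]
  have : ⌊y + 1/2⌋ = 1 := by
    rw [Int.floor_eq_iff]
    constructor <;> [push_cast; push_cast] <;> linarith
  rw [this]
  push_cast
  rw [abs_of_nonpos (by linarith)]
  ring

lemma f_one : f 1 = 1 := by simp [f]

/-- The key slope lemma. -/
lemma tau_slope (k : ℕ) : ∀ n : ℕ, n < 2 ^ k →
    τ (((n:ℝ) + 1) / 2 ^ k) = τ ((n:ℝ) / 2 ^ k) + (1 - (f (n + 2 ^ k) : ℝ)) / 2 ^ k := by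
  induction k with
  | zero =>
    intro n hn
    interval_cases n
    simp [tau_one, tau_zero, f_one]
  | succ k ih =>
    intro n hn
    have hk : (0:ℝ) < 2 ^ k := by positivity
    have hk1 : (0:ℝ) < 2 ^ (k+1) := by positivity
    have hpow : (2:ℝ) ^ (k+1) = 2 ^ k * 2 := by ring
    have e1 : τ (((n:ℝ) + 1) / 2 ^ (k+1)) =
        s (((n:ℝ) + 1) / 2 ^ (k+1)) + τ (((n:ℝ) + 1) / 2 ^ k) / 2 := by
      rw [tau_eq (((n:ℝ) + 1) / 2 ^ (k+1))]
      congr 3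
      rw [hpow]
      field_simp
    have e0 : τ ((n:ℝ) / 2 ^ (k+1)) =
        s ((n:ℝ) / 2 ^ (k+1)) + τ ((n:ℝ) / 2 ^ k) / 2 := by
      rw [tau_eq ((n:ℝ) / 2 ^ (k+1))]
      congr 3
      rw [hpow]
      field_simp
    rcases lt_or_ge n (2 ^ k) with hcase | hcase
    · -- lower half
      have hnr : (n:ℝ) + 1 ≤ 2 ^ k := by
        have : (n:ℕ) + 1 ≤ 2 ^ k := hcase
        exact_mod_cast this
      have hs1 : s (((n:ℝ) + 1) / 2 ^ (k+1)) = ((n:ℝ) + 1) / 2 ^ (k+1) := by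
        apply s_lower
        · positivity
        · rw [div_le_div_iff₀ hk1 (by norm_num), hpow]
          nlinarith
      have hs0 : s ((n:ℝ) / 2 ^ (k+1)) = (n:ℝ) / 2 ^ (k+1) := by
        apply s_lower
        · positivity
        · rw [div_le_div_iff₀ hk1 (by norm_num), hpow]
          have : (0:ℝ) ≤ (n:ℝ) := Nat.cast_nonneg n
          nlinarith
      rw [e1, e0, hs1, hs0, ih n hcase]
      rw [f_add_pow k n hcase, f_add_pow (k+1) n (by omega)]
      push_cast
      rw [hpow]
      field_simp
      ring
    · -- upper half
      set r := n - 2 ^ k with hr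
      have hrn : n = r + 2 ^ k := by omega
      have hrlt : r < 2 ^ k := by omega
      have hcast : (n:ℝ) = (r:ℝ) + 2 ^ k := by
        rw [hrn]; push_cast; ring
      have hub : (n:ℝ) + 1 ≤ 2 ^ (k+1) := by
        have : (n:ℕ) + 1 ≤ 2 ^ (k+1) := hn
        exact_mod_cast this
      have hlb : (2:ℝ) ^ k ≤ (n:ℝ) := by
        have : (2:ℕ) ^ k ≤ n := hcase
        exact_mod_cast this
      have hs1 : s (((n:ℝ) + 1) / 2 ^ (k+1)) = 1 - ((n:ℝ) + 1) / 2 ^ (k+1) := by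
        apply s_upper
        · rw [le_div_iff₀ hk1, hpow]
          nlinarith
        · rw [div_le_one hk1]
          linarith
      have hs0 : s ((n:ℝ) / 2 ^ (k+1)) = 1 - (n:ℝ) / 2 ^ (k+1) := by
        apply s_upper
        · rw [le_div_iff₀ hk1, hpow]
          nlinarith
        · rw [div_le_one hk1]
          linarith
      have hper1 : τ (((n:ℝ) + 1) / 2 ^ k) = τ (((r:ℝ) + 1) / 2 ^ k) := by
        have harg : ((n:ℝ) + 1) / 2 ^ k = ((r:ℝ) + 1) / 2 ^ k + 1 := by
          rw [hcast]
          field_simp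
          ring
        rw [harg, tau_add_one]
      have hper0 : τ ((n:ℝ) / 2 ^ k) = τ ((r:ℝ) / 2 ^ k) := by
        have harg : (n:ℝ) / 2 ^ k = (r:ℝ) / 2 ^ k + 1 := by
          rw [hcast]
          field_simp
        rw [harg, tau_add_one]
      have hcn : c n = c r + 1 := by
        rw [hrn]
        exact count_add_pow k r hrlt
      rw [e1, e0, hs1, hs0, hper1, hper0, ih r hrlt]
      rw [f_add_pow k r hrlt, f_add_pow (k+1) n (by omega), hcn]
      rw [hcast]
      push_cast
      rw [hpow]
      field_simp
      ring

theorem stmt_9 (n k : ℕ) (h : n ≤ 2 ^ k) :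
    τ ((n : ℝ) / 2 ^ k) = 1 + (n : ℝ) / 2 ^ k - (1 + (D (n + 2 ^ k - 1) : ℝ)) / 2 ^ k := by
  have hk : (0:ℝ) < 2 ^ k := by positivity
  have hkn : (0:ℕ) < 2 ^ k := by positivity
  induction n with
  | zero =>
    have hD : (D (0 + 2 ^ k - 1) : ℝ) = 2 ^ k - 1 := by
      have := D_pow k
      rw [Nat.zero_add]
      rw [this]
      push_cast
      ring
    simp only [Nat.cast_zero, zero_div, tau_zero, hD]
    field_simp
    ring
  | succ n ih =>
    have hn : n < 2 ^ k := h
    have hIH := ih (le_of_lt hn)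
    have hslope := tau_slope k n hn
    have hcast : ((n:ℕ) + 1 : ℝ) = (n:ℝ) + 1 := by push_cast; ring
    have hDrw : D (n + 1 + 2 ^ k - 1) = D (n + 2 ^ k - 1) + f (n + 2 ^ k) := by
      have h1 : n + 1 + 2 ^ k - 1 = (n + 2 ^ k - 1) + 1 := by omega
      have h2 : (n + 2 ^ k - 1) + 1 = n + 2 ^ k := by omega
      rw [h1, D_succ, h2]
    push_cast
    rw [hslope, hIH, hDrw]
    push_cast
    field_simp
    ring
end

section
/- For every nonnegative integer m, D((5·4^m − 2)/3) = 4^m. -/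
lemma f_zero : f 0 = 0 := by simp [f]

lemma f_odd (k : ℕ) : f (2*k+1) = f k + 1 := by
  unfold f
  rw [Nat.digits_def' (b := 2) (by norm_num) (by omega)]
  have h1 : (2*k+1) % 2 = 1 := by omega
  have h2 : (2*k+1) / 2 = k := by omega
  rw [h1, h2]
  simp [List.count_cons]
  ring

lemma f_even (k : ℕ) (hk : 0 < k) : f (2*k) = f k - 1 := by
  unfold f
  rw [Nat.digits_def' (b := 2) (by norm_num) (by omega)]
  have h1 : (2*k) % 2 = 0 := by omega
  have h2 : (2*k) / 2 = k := by omega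
  rw [h1, h2]
  simp [List.count_cons]
  ring

lemma D_step (n : ℕ) : D (n+1) = D n + f (n+1) :=
  Finset.sum_Icc_succ_top (by omega) f

lemma D_zero : D 0 = 0 := by simp [D]

lemma D_one : D 1 = 1 := by
  have := D_step 0
  rw [D_zero, f_one] at this
  simpa using this

lemma D_odd (n : ℕ) : D (2*n+1) = 2 * D n + 1 := by
  induction n with
  | zero => simpa [D_zero] using D_one
  | succ n ih =>
    have e1 : 2*(n+1)+1 = (2*n+1)+1+1 := by ring
    rw [e1, D_step, D_step, ih]
    have e2 : 2*n+1+1 = 2*(n+1) := by ring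
    rw [e2, f_even (n+1) (by omega), f_odd (n+1), D_step n]
    ring

lemma key (n : ℕ) : D (4*n+2) = 4*D n - f n + 1 := by
  have h1 : 4*n+2 = 2*(2*n+1) := by ring
  have hD : D (2*(2*n+1)) = 2*D (2*n+1) - f (2*n+1) := by
    have := D_step (2*(2*n+1) - 1)
    have e : 2*(2*n+1) - 1 + 1 = 2*(2*n+1) := by omega
    have e2 : 2*(2*n+1) - 1 = 2*(2*n)+1 := by omega
    have hodd := D_odd (2*n+1)
    have hodd2 := D_odd (2*n)
    rw [e, e2] at this
    have hf : f (2*(2*n+1)) = f (2*n+1) - 1 := f_even (2*n+1) (by omega)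
    have hs := D_step (2*n)
    linarith [hodd2, hf, hs, this]
  rw [h1, hD, D_odd n, f_odd n]
  ring

lemma f_key (n : ℕ) : f (4*n+2) = f n := by
  have h1 : 4*n+2 = 2*(2*n+1) := by ring
  rw [h1, f_even (2*n+1) (by omega), f_odd n]
  ring

theorem stmt_18 (m : ℕ) : D ((5 * 4 ^ m - 2) / 3) = 4 ^ m := by
  suffices h : ∃ c, 5*4^m = 3*c + 2 ∧ D c = 4^m ∧ f c = 1 by
    obtain ⟨c, h1, h2, h3⟩ := h
    have hc : (5 * 4 ^ m - 2) / 3 = c := by omega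
    rw [hc, h2]
  induction m with
  | zero => exact ⟨1, by norm_num, by simpa using D_one, f_one⟩
  | succ n ih =>
    obtain ⟨c, h1, h2, h3⟩ := ih
    refine ⟨4*c+2, ?_, ?_, ?_⟩
    · have : 5 * 4^(n+1) = 4 * (5 * 4^n) := by ring
      rw [this, h1]; ring
    · rw [key c, h2, h3]; ring
    · rw [f_key, h3]
end
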